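/- Let μ, ν be Borel probability measures on R^{n+1} with finite second moment. Then ν is a translate of μ (i.e., ν = (t_v)_#μ for some v ∈ R^{n+1}) if and only if d_{W₂}(μ, ν) = ‖m(ν) − m(μ)‖. -/

import Mathlib

open MeasureTheory

/-- The squared quadratic Wasserstein distance, as the infimum of transport costs
over all couplings. -/
noncomputable def W2sq {E : Type*} [NormedAddCommGroup E] [MeasurableSpace E]
    (μ ν : Measure E) : ℝ :=
  sInf {c : ℝ | ∃ π : Measure (E × E), IsProbabilityMeasure π ∧
    π.map Prod.fst = μ ∧ π.map Prod.snd = ν ∧ c = ∫ p, ‖p.1 - p.2‖^2 ∂π}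

/-- The quadratic Wasserstein distance. -/
noncomputable def W2dist {E : Type*} [NormedAddCommGroup E] [MeasurableSpace E]
    (μ ν : Measure E) : ℝ :=
  Real.sqrt (W2sq μ ν)

open scoped RealInnerProductSpace

section Aux

set_option linter.unusedSectionVars false

variable {X : Type*} [MeasurableSpace X]
variable {E : Type*} [NormedAddCommGroup E] [InnerProductSpace ℝ E]
  [MeasurableSpace E] [BorelSpace E] [SecondCountableTopology E] [CompleteSpace E]

lemma integrable_of_sq {f : X → E} {m : Measure X} [IsFiniteMeasure m]
    (hf : AEStronglyMeasurable f m) (h2 : Integrable (fun x => ‖f x‖^2) m) :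
    Integrable f m := by
  refine ((integrable_const (1:ℝ)).add h2).mono' hf ?_
  filter_upwards with x
  simp only [Pi.add_apply]
  nlinarith [norm_nonneg (f x), sq_nonneg (‖f x‖ - 1)]

lemma variance_identity {f : X → E} {m : Measure X} [IsProbabilityMeasure m]
    (hf : Integrable f m) (h2 : Integrable (fun x => ‖f x‖^2) m) {c : E}
    (hc : c = ∫ x, f x ∂m) :
    ∫ x, ‖f x - c‖^2 ∂m = (∫ x, ‖f x‖^2 ∂m) - ‖c‖^2 := by
  have expand : (fun x => ‖f x - c‖^2) =
      fun x => ‖f x‖^2 - 2 * ⟪c, f x⟫ + ‖c‖^2 := by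
    ext x; rw [norm_sub_sq_real, real_inner_comm]
  rw [expand]
  have hi1 : Integrable (fun x => ‖f x‖^2 - 2 * ⟪c, f x⟫) m :=
    h2.sub ((hf.const_inner c).const_mul 2)
  have hi2 : Integrable (fun x => 2 * ⟪c, f x⟫) m := (hf.const_inner c).const_mul 2
  rw [integral_add hi1 (integrable_const _), integral_sub h2 hi2, integral_const_mul,
    integral_inner hf, ← hc, real_inner_self_eq_norm_sq]
  simp [measure_univ]
  ring

lemma integrable_of_sq_real {g : X → ℝ} {m : Measure X} [IsFiniteMeasure m]
    (hgm : AEStronglyMeasurable g m) (h2 : Integrable (fun x => (g x)^2) m) :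
    Integrable g m := by
  refine ((integrable_const (1:ℝ)).add h2).mono' hgm ?_
  filter_upwards with x
  simp only [Pi.add_apply, Real.norm_eq_abs]
  nlinarith [sq_nonneg (|g x| - 1), abs_nonneg (g x), sq_abs (g x)]

lemma cs_integral {g : X → ℝ} {m : Measure X} [IsProbabilityMeasure m]
    (hgm : AEStronglyMeasurable g m) (h2 : Integrable (fun x => (g x)^2) m)
    (hpos : ∀ x, 0 ≤ g x) :
    ∫ x, g x ∂m ≤ Real.sqrt (∫ x, (g x)^2 ∂m) := by
  have hg : Integrable g m := integrable_of_sq_real hgm h2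
  set a := ∫ x, g x ∂m with ha'
  have ha : 0 ≤ a := integral_nonneg hpos
  have key : a^2 ≤ ∫ x, (g x)^2 ∂m := by
    have h0 : 0 ≤ ∫ x, (g x - a)^2 ∂m := integral_nonneg (fun x => sq_nonneg _)
    have he : (fun x => (g x - a)^2) = fun x => (g x)^2 - 2*a*(g x) + a^2 := by
      ext x; ring
    have hi1 : Integrable (fun x => (g x)^2 - 2*a*(g x)) m := h2.sub (hg.const_mul (2*a))
    have hi2 : Integrable (fun x => 2*a*(g x)) m := hg.const_mul (2*a)
    rw [he, integral_add hi1 (integrable_const _), integral_sub h2 hi2, integral_const_mul] at h0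
    simp [measure_univ, ← ha'] at h0
    nlinarith
  calc a = Real.sqrt (a^2) := (Real.sqrt_sq ha).symm
    _ ≤ _ := Real.sqrt_le_sqrt key

lemma coupling_facts {μ ν : Measure E} [IsProbabilityMeasure μ] [IsProbabilityMeasure ν]
    (hμ : Integrable (fun x => ‖x‖^2) μ) (hν : Integrable (fun x => ‖x‖^2) ν)
    (π : Measure (E × E)) [IsProbabilityMeasure π]
    (h1 : π.map Prod.fst = μ) (h2 : π.map Prod.snd = ν) :
    Integrable (fun p : E × E => ‖p.1 - p.2‖^2) π ∧
      Integrable (fun p : E × E => p.1 - p.2) π ∧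
      (∫ p : E × E, (p.1 - p.2) ∂π) = (∫ x, x ∂μ) - (∫ y, y ∂ν) := by
  have hA : Integrable (fun p : E × E => ‖p.1‖^2) π := by
    have h := (integrable_map_measure
      ((continuous_norm.pow 2).aestronglyMeasurable) measurable_fst.aemeasurable).mp
      (by rwa [h1])
    exact h
  have hB : Integrable (fun p : E × E => ‖p.2‖^2) π := by
    have h := (integrable_map_measure
      ((continuous_norm.pow 2).aestronglyMeasurable) measurable_snd.aemeasurable).mp
      (by rwa [h2])
    exact h
  have hcost : Integrable (fun p : E × E => ‖p.1 - p.2‖^2) π := by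
    refine ((hA.const_mul 2).add (hB.const_mul 2)).mono'
      (Continuous.aestronglyMeasurable (by fun_prop)) ?_
    filter_upwards with p
    simp only [Pi.add_apply, Real.norm_eq_abs]
    rw [abs_of_nonneg (sq_nonneg ‖p.1 - p.2‖)]
    nlinarith [norm_sub_le p.1 p.2, norm_nonneg p.1, norm_nonneg p.2,
      norm_nonneg (p.1 - p.2), sq_nonneg (‖p.1‖ - ‖p.2‖)]
  have hf1 : Integrable (fun p : E × E => p.1) π :=
    integrable_of_sq (Continuous.aestronglyMeasurable (by fun_prop)) hA
  have hf2 : Integrable (fun p : E × E => p.2) π :=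
    integrable_of_sq (Continuous.aestronglyMeasurable (by fun_prop)) hB
  refine ⟨hcost, hf1.sub hf2, ?_⟩
  have e1 : ∫ x : E, x ∂(Measure.map Prod.fst π) = ∫ p : E × E, p.1 ∂π :=
    integral_map measurable_fst.aemeasurable aestronglyMeasurable_id
  have e2 : ∫ x : E, x ∂(Measure.map Prod.snd π) = ∫ p : E × E, p.2 ∂π :=
    integral_map measurable_snd.aemeasurable aestronglyMeasurable_id
  rw [integral_sub hf1 hf2, ← h1, ← h2, e1, e2]

lemma cost_lower {μ ν : Measure E} [IsProbabilityMeasure μ] [IsProbabilityMeasure ν]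
    (hμ : Integrable (fun x => ‖x‖^2) μ) (hν : Integrable (fun x => ‖x‖^2) ν)
    (π : Measure (E × E)) [IsProbabilityMeasure π]
    (h1 : π.map Prod.fst = μ) (h2 : π.map Prod.snd = ν) :
    ‖(∫ y, y ∂ν) - ∫ x, x ∂μ‖^2 ≤ ∫ p : E × E, ‖p.1 - p.2‖^2 ∂π := by
  obtain ⟨hcost, hf, hint⟩ := coupling_facts hμ hν π h1 h2
  have hvar := variance_identity hf hcost hint.symm
  have h0 : 0 ≤ ∫ p : E × E, ‖(p.1 - p.2) - ((∫ x, x ∂μ) - ∫ y, y ∂ν)‖^2 ∂π :=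
    integral_nonneg fun p => sq_nonneg _
  rw [hvar] at h0
  rw [norm_sub_rev]
  linarith

lemma W2sq_set_nonempty (μ ν : Measure E) [IsProbabilityMeasure μ] [IsProbabilityMeasure ν] :
    {c : ℝ | ∃ π : Measure (E × E), IsProbabilityMeasure π ∧
      π.map Prod.fst = μ ∧ π.map Prod.snd = ν ∧ c = ∫ p, ‖p.1 - p.2‖^2 ∂π}.Nonempty :=
  ⟨∫ p : E × E, ‖p.1 - p.2‖^2 ∂(μ.prod ν), μ.prod ν, inferInstance,
    by simp, by simp, rfl⟩

lemma W2sq_lower {μ ν : Measure E} [IsProbabilityMeasure μ] [IsProbabilityMeasure ν]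
    (hμ : Integrable (fun x => ‖x‖^2) μ) (hν : Integrable (fun x => ‖x‖^2) ν) :
    ‖(∫ y, y ∂ν) - ∫ x, x ∂μ‖^2 ≤ W2sq μ ν := by
  refine le_csInf (W2sq_set_nonempty μ ν) ?_
  rintro c ⟨π, hπ, h1, h2, rfl⟩
  haveI := hπ
  exact cost_lower hμ hν π h1 h2

lemma W2sq_bddBelow (μ ν : Measure E) [IsProbabilityMeasure μ] [IsProbabilityMeasure ν]
    (hμ : Integrable (fun x => ‖x‖^2) μ) (hν : Integrable (fun x => ‖x‖^2) ν) :
    BddBelow {c : ℝ | ∃ π : Measure (E × E), IsProbabilityMeasure π ∧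
      π.map Prod.fst = μ ∧ π.map Prod.snd = ν ∧ c = ∫ p, ‖p.1 - p.2‖^2 ∂π} := by
  refine ⟨0, ?_⟩
  rintro c ⟨π, hπ, h1, h2, rfl⟩
  exact integral_nonneg fun p => sq_nonneg _

lemma mean_translate (μ : Measure E) [IsProbabilityMeasure μ]
    (hμ : Integrable (fun x => ‖x‖^2) μ) (v : E) :
    ∫ y, y ∂(μ.map (fun x => x + v)) = (∫ x, x ∂μ) + v := by
  have e : ∫ y : E, y ∂(μ.map (fun x => x + v)) = ∫ x, (x + v) ∂μ :=
    integral_map (by fun_prop) aestronglyMeasurable_id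
  have hid : Integrable (fun x : E => x) μ := integrable_of_sq aestronglyMeasurable_id hμ
  rw [e, integral_add hid (integrable_const v)]
  simp [measure_univ]

end Aux

set_option maxHeartbeats 1000000 in
theorem stmt_6 (n : ℕ) (μ ν : Measure (EuclideanSpace ℝ (Fin (n+1))))
    [IsProbabilityMeasure μ] [IsProbabilityMeasure ν]
    (hμ : Integrable (fun x => ‖x‖^2) μ) (hν : Integrable (fun x => ‖x‖^2) ν) :
    (∃ v : EuclideanSpace ℝ (Fin (n+1)), ν = μ.map (fun x => x + v))
      ↔ W2dist μ ν = ‖(∫ y, y ∂ν) - ∫ y, y ∂μ‖ := by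
  set E := EuclideanSpace ℝ (Fin (n+1))
  constructor
  · rintro ⟨v, rfl⟩
    haveI : IsProbabilityMeasure (μ.map (fun x => x + v)) :=
      Measure.isProbabilityMeasure_map (by fun_prop)
    have hmean : ∫ y, y ∂(μ.map fun x => x + v) = (∫ x, x ∂μ) + v := mean_translate μ hμ v
    have hΔ : (∫ y, y ∂(μ.map fun x => x + v)) - ∫ y, y ∂μ = v := by
      rw [hmean]; abel
    have hub : W2sq μ (μ.map fun x => x + v) ≤ ‖v‖^2 := by
      apply csInf_le (W2sq_bddBelow _ _ hμ hν)
      refine ⟨μ.map (fun x => (x, x + v)), Measure.isProbabilityMeasure_map (by fun_prop), ?_, ?_, ?_⟩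
      · rw [Measure.map_map measurable_fst (by fun_prop)]
        exact Measure.map_id'
      · rw [Measure.map_map measurable_snd (by fun_prop)]
        rfl
      · rw [integral_map (by fun_prop) (Continuous.aestronglyMeasurable (by fun_prop))]
        have he : ∀ x : E, x - (x + v) = -v := fun x => by abel
        simp [he, measure_univ]
    have hlb : ‖v‖^2 ≤ W2sq μ (μ.map fun x => x + v) := by
      have := W2sq_lower hμ hν
      rwa [hΔ] at this
    have hW : W2sq μ (μ.map fun x => x + v) = ‖v‖^2 := le_antisymm hub hlb
    rw [W2dist, hW, hΔ, Real.sqrt_sq (norm_nonneg v)]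
  · intro h
    set v : E := (∫ y, y ∂ν) - ∫ y, y ∂μ with hv
    refine ⟨v, ?_⟩
    haveI : IsProbabilityMeasure (μ.map (fun x => x + v)) :=
      Measure.isProbabilityMeasure_map (by fun_prop)
    have hlb : ‖v‖^2 ≤ W2sq μ ν := W2sq_lower hμ hν
    have h0 : 0 ≤ W2sq μ ν := le_trans (sq_nonneg _) hlb
    have hW : W2sq μ ν = ‖v‖^2 := by
      rw [← Real.sq_sqrt h0]
      rw [W2dist] at h
      rw [h]
    -- key: equality of integrals of bounded Lipschitz functions
    have key : ∀ (g : E → ℝ) (K : ℝ), 0 ≤ K → Continuous g → (∀ x, |g x| ≤ 1) →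
        (∀ x y, |g x - g y| ≤ K * ‖x - y‖) →
        ∫ x, g x ∂(μ.map (fun x => x + v)) = ∫ x, g x ∂ν := by
      intro g K hK hgc hgb hlip
      have habs : ∀ ε : ℝ, 0 < ε →
          |(∫ x, g x ∂(μ.map (fun x => x + v))) - ∫ x, g x ∂ν| ≤ ε := by
        intro ε hε
        set ε' : ℝ := (ε / (K + 1))^2 with hε'
        have hε'pos : 0 < ε' := by positivity
        have hcs : W2sq μ ν < ‖v‖^2 + ε' := by rw [hW]; linarith
        obtain ⟨c, ⟨π, hπ, h1, h2, rfl⟩, hclt⟩ :=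
          exists_lt_of_csInf_lt (W2sq_set_nonempty μ ν) hcs
        haveI := hπ
        obtain ⟨hcost, hf, hint⟩ := coupling_facts hμ hν π h1 h2
        have hmv : (∫ x, x ∂μ) - (∫ y, y ∂ν) = -v := by rw [hv]; abel
        have hvar := variance_identity hf hcost hint.symm
        rw [hmv] at hvar
        have hre : (fun p : E × E => ‖(p.1 - p.2) - (-v)‖^2)
            = fun p : E × E => ‖p.1 + v - p.2‖^2 := by
          ext p; rw [sub_neg_eq_add]; ring_nf
          congr 2; abel
        rw [hre, norm_neg] at hvar
        have hsmall : ∫ p : E × E, ‖p.1 + v - p.2‖^2 ∂π ≤ ε' := by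
          rw [hvar]; linarith
        have hq : Integrable (fun p : E × E => ‖p.1 + v - p.2‖^2) π := by
          rw [← hre]
          refine ((hcost.const_mul 2).add (integrable_const (2 * ‖v‖^2))).mono'
            (Continuous.aestronglyMeasurable (by fun_prop)) ?_
          filter_upwards with p
          simp only [Pi.add_apply, Real.norm_eq_abs]
          rw [abs_of_nonneg (sq_nonneg ‖p.1 - p.2 - -v‖)]
          have hnn : ‖(-v : E)‖ = ‖v‖ := norm_neg v
          nlinarith [norm_sub_le (p.1 - p.2) (-v), norm_nonneg (p.1 - p.2), norm_nonneg v,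
            norm_nonneg (p.1 - p.2 - -v), sq_nonneg (‖p.1 - p.2‖ - ‖v‖)]
        have hcs2 : ∫ p : E × E, ‖p.1 + v - p.2‖ ∂π ≤ ε / (K + 1) := by
          have := cs_integral (g := fun p : E × E => ‖p.1 + v - p.2‖)
            (Continuous.aestronglyMeasurable (by fun_prop)) hq (fun p => norm_nonneg _)
          refine this.trans ?_
          calc Real.sqrt (∫ p : E × E, ‖p.1 + v - p.2‖^2 ∂π)
              ≤ Real.sqrt ε' := Real.sqrt_le_sqrt hsmall
            _ = ε / (K + 1) := by rw [hε', Real.sqrt_sq (by positivity)]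
        have hg1 : ∫ x, g x ∂(μ.map (fun x => x + v)) = ∫ p : E × E, g (p.1 + v) ∂π := by
          rw [integral_map (by fun_prop) hgc.aestronglyMeasurable, ← h1,
            integral_map measurable_fst.aemeasurable
              (Continuous.aestronglyMeasurable (by fun_prop))]
        have hg2 : ∫ x, g x ∂ν = ∫ p : E × E, g p.2 ∂π := by
          rw [← h2, integral_map measurable_snd.aemeasurable hgc.aestronglyMeasurable]
        have hb1 : Integrable (fun p : E × E => g (p.1 + v)) π := by
          refine (integrable_const (1:ℝ)).mono'
            (Continuous.aestronglyMeasurable (by fun_prop)) ?_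
          filter_upwards with p using (by simpa using hgb (p.1 + v))
        have hb2 : Integrable (fun p : E × E => g p.2) π := by
          refine (integrable_const (1:ℝ)).mono'
            (Continuous.aestronglyMeasurable (by fun_prop)) ?_
          filter_upwards with p using (by simpa using hgb p.2)
        have hnrm : Integrable (fun p : E × E => ‖p.1 + v - p.2‖) π :=
          integrable_of_sq_real (Continuous.aestronglyMeasurable (by fun_prop)) hq
        calc |(∫ x, g x ∂(μ.map (fun x => x + v))) - ∫ x, g x ∂ν|
            = |∫ p : E × E, (g (p.1 + v) - g p.2) ∂π| := by
              rw [hg1, hg2, integral_sub hb1 hb2]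
          _ ≤ ∫ p : E × E, |g (p.1 + v) - g p.2| ∂π := by
              simpa using norm_integral_le_integral_norm (fun p : E × E => g (p.1 + v) - g p.2)
          _ ≤ ∫ p : E × E, K * ‖p.1 + v - p.2‖ ∂π := by
              refine integral_mono (hb1.sub hb2).abs (hnrm.const_mul K) ?_
              intro p
              exact hlip _ _
          _ = K * ∫ p : E × E, ‖p.1 + v - p.2‖ ∂π := integral_const_mul _ _
          _ ≤ ε := by
              have h1 : K * ∫ p : E × E, ‖p.1 + v - p.2‖ ∂π ≤ K * (ε / (K + 1)) :=
                mul_le_mul_of_nonneg_left hcs2 hK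
              have h2 : K * (ε / (K + 1)) ≤ ε := by
                rw [mul_div_assoc', div_le_iff₀ (by positivity)]
                nlinarith
              linarith
      have : |(∫ x, g x ∂(μ.map (fun x => x + v))) - ∫ x, g x ∂ν| ≤ 0 := by
        refine le_of_forall_pos_le_add ?_
        intro ε hε
        simpa using habs ε hε
      have := abs_nonpos_iff.mp this
      linarith [sub_eq_zero.mp this]
    -- conclude equality of measures
    have keyF : ∀ F : Set E, IsClosed F → (μ.map (fun x => x + v)) F = ν F := by
      intro F hF
      rcases F.eq_empty_or_nonempty with rfl | hFne
      · simp
      set gs : ℕ → E → ℝ := fun k x => max (1 - (k+1) * Metric.infDist x F) 0 with hgs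
      have hgs0 : ∀ k x, 0 ≤ gs k x := fun k x => le_max_right _ _
      have hgs1 : ∀ k x, gs k x ≤ 1 := by
        intro k x
        refine max_le ?_ zero_le_one
        have h1 : 0 ≤ Metric.infDist x F := Metric.infDist_nonneg
        have hk : (0:ℝ) ≤ (k+1) := by positivity
        nlinarith
      have hgsc : ∀ k, Continuous (gs k) := by
        intro k
        exact ((continuous_const.sub (continuous_const.mul
          (Metric.lipschitz_infDist_pt F).continuous)).max continuous_const)
      have hgslip : ∀ k x y, |gs k x - gs k y| ≤ ((k:ℝ)+1) * ‖x - y‖ := by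
        intro k x y
        have h1 := abs_max_sub_max_le_abs (1 - ((k:ℝ)+1) * Metric.infDist x F)
          (1 - ((k:ℝ)+1) * Metric.infDist y F) 0
        have h2 : |(1 - ((k:ℝ)+1) * Metric.infDist x F) - (1 - ((k:ℝ)+1) * Metric.infDist y F)|
            = ((k:ℝ)+1) * |Metric.infDist x F - Metric.infDist y F| := by
          have he : (1 - ((k:ℝ)+1) * Metric.infDist x F) - (1 - ((k:ℝ)+1) * Metric.infDist y F)
              = (((k:ℝ)+1)) * (Metric.infDist y F - Metric.infDist x F) := by ring
          rw [he, abs_mul, abs_of_nonneg (by positivity : (0:ℝ) ≤ (k:ℝ)+1), abs_sub_comm]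
        have h3 : |Metric.infDist x F - Metric.infDist y F| ≤ dist x y := by
          rw [abs_sub_le_iff]
          constructor
          · linarith [Metric.infDist_le_infDist_add_dist (x := x) (y := y) (s := F)]
          · linarith [Metric.infDist_le_infDist_add_dist (x := y) (y := x) (s := F),
              dist_comm x y]
        calc |gs k x - gs k y| ≤ |(1 - ((k:ℝ)+1) * Metric.infDist x F)
              - (1 - ((k:ℝ)+1) * Metric.infDist y F)| := h1
          _ = ((k:ℝ)+1) * |Metric.infDist x F - Metric.infDist y F| := h2
          _ ≤ ((k:ℝ)+1) * dist x y := by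
              exact mul_le_mul_of_nonneg_left h3 (by positivity)
          _ = ((k:ℝ)+1) * ‖x - y‖ := by rw [dist_eq_norm]
      have hgslim : ∀ x : E, Filter.Tendsto (fun k => gs k x) Filter.atTop
          (nhds (Set.indicator F (fun _ => (1:ℝ)) x)) := by
        intro x
        by_cases hx : x ∈ F
        · have hd : Metric.infDist x F = 0 := Metric.infDist_zero_of_mem hx
          simp only [hgs, hd, mul_zero, sub_zero, Set.indicator_of_mem hx]
          simpa using tendsto_const_nhds
        · have hd : 0 < Metric.infDist x F := (hF.notMem_iff_infDist_pos hFne).mp hx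
          rw [Set.indicator_of_notMem hx]
          obtain ⟨N, hN⟩ := exists_nat_ge (1 / Metric.infDist x F)
          apply Filter.Tendsto.congr' (f₁ := fun _ => (0:ℝ))
          · filter_upwards [Filter.eventually_ge_atTop N] with k hk
            have hk1 : 1 / Metric.infDist x F ≤ (k:ℝ) + 1 := by
              calc 1 / Metric.infDist x F ≤ (N:ℝ) := hN
                _ ≤ (k:ℝ) := by exact_mod_cast hk
                _ ≤ (k:ℝ) + 1 := by linarith
            have : 1 ≤ ((k:ℝ)+1) * Metric.infDist x F := by
              rw [div_le_iff₀ hd] at hk1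
              linarith
            simp only [hgs]
            rw [max_eq_right (by linarith)]
          · exact tendsto_const_nhds
      have hdct : ∀ (m : Measure E), IsProbabilityMeasure m →
          Filter.Tendsto (fun k => ∫ x, gs k x ∂m) Filter.atTop
            (nhds ((m F).toReal)) := by
        intro m hm
        haveI := hm
        have h := tendsto_integral_of_dominated_convergence (μ := m)
          (F := fun k x => gs k x) (f := Set.indicator F (fun _ => (1:ℝ)))
          (bound := fun _ => 1)
          (fun k => (hgsc k).aestronglyMeasurable)
          (integrable_const 1)
          (fun k => by
            filter_upwards with x
            rw [Real.norm_eq_abs, abs_of_nonneg (hgs0 k x)]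
            exact hgs1 k x)
          (by filter_upwards with x using hgslim x)
        have heq : ∫ x, Set.indicator F (fun _ => (1:ℝ)) x ∂m = (m F).toReal := by
          rw [integral_indicator_const (1:ℝ) hF.measurableSet]
          simp
          rfl
        rwa [heq] at h
      have hAB := hdct (μ.map (fun x => x + v)) inferInstance
      have hCD := hdct ν inferInstance
      have heq : ∀ k, ∫ x, gs k x ∂(μ.map (fun x => x + v)) = ∫ x, gs k x ∂ν := by
        intro k
        refine key (gs k) ((k:ℝ)+1) (by positivity) (hgsc k) ?_ (hgslip k)
        intro x
        rw [abs_of_nonneg (hgs0 k x)]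
        exact hgs1 k x
      have : ((μ.map (fun x => x + v)) F).toReal = (ν F).toReal := by
        refine tendsto_nhds_unique ?_ hCD
        simpa only [heq] using hAB
      exact (ENNReal.toReal_eq_toReal_iff' (measure_ne_top _ _) (measure_ne_top _ _)).mp this
    symm
    refine ext_of_generate_finite {s : Set E | IsClosed s} ?_
      isPiSystem_isClosed ?_ ?_
    · exact (BorelSpace.measurable_eq (α := E)).trans borel_eq_generateFrom_isClosed
    · exact fun s hs => keyF s hs
    · simp [measure_univ]
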